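/- arXiv:2009.07893 — 5 statements merged into one kernel-verified Lean document; each statement's English description precedes it below -/
import Mathlib

section
/- For every even integer n ≥ 6, (n/8)·sin(2π/n) < ((n−1)/2)·(sin(π/(n−1)) − tan(π/(2(n−1)))), i.e., the area of the regular small n-gon is strictly less than the area of the regular small (n−1)-gon. -/
set_option maxHeartbeats 1000000

open Real

private lemma sin_taylor_lb (x : ℝ) (hx : 0 ≤ x) : x - x ^ 3 / 6 ≤ Real.sin x := by
  have key : Monotone (fun y : ℝ => Real.sin y - (y - y ^ 3 / 6)) := by
    apply monotone_of_hasDerivAt_nonneg (f' := fun y : ℝ => Real.cos y - (1 - y ^ 2 / 2))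
    · intro y
      have h := (Real.hasDerivAt_sin y).sub
        ((hasDerivAt_id y).sub ((hasDerivAt_pow 3 y).div_const 6))
      refine h.congr_deriv ?_
      norm_num
      ring
    · intro y
      simpa using Real.one_sub_sq_div_two_le_cos (x := y)
  have h0 := key hx
  simpa using h0

private lemma cos_taylor_ub (x : ℝ) (hx : 0 ≤ x) :
    Real.cos x ≤ 1 - x ^ 2 / 2 + x ^ 4 / 24 := by
  have key : MonotoneOn (fun y : ℝ => (1 - y ^ 2 / 2 + y ^ 4 / 24) - Real.cos y) (Set.Ici 0) := by
    apply monotoneOn_of_hasDerivWithinAt_nonneg (convex_Ici 0)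
      (f' := fun y : ℝ => Real.sin y - (y - y ^ 3 / 6))
    · fun_prop
    · intro y _
      apply HasDerivAt.hasDerivWithinAt
      have h := (((hasDerivAt_id y).pow 2).div_const 2).const_sub (c := 1)
        |>.add ((hasDerivAt_pow 4 y).div_const 24) |>.sub (Real.hasDerivAt_cos y)
      refine h.congr_deriv ?_
      simp
      ring
    · intro y hy
      rw [interior_Ici] at hy
      have := sin_taylor_lb y (le_of_lt hy)
      linarith
  have h0 := key (Set.self_mem_Ici) (Set.mem_Ici.2 hx) hx
  simp only [ne_eq, OfNat.ofNat_ne_zero, not_false_eq_true, zero_pow, zero_div, sub_zero,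
    add_zero, Real.cos_zero, sub_self] at h0
  linarith

private lemma sin_taylor_ub (x : ℝ) (hx : 0 ≤ x) :
    Real.sin x ≤ x - x ^ 3 / 6 + x ^ 5 / 120 := by
  have key : MonotoneOn (fun y : ℝ => (y - y ^ 3 / 6 + y ^ 5 / 120) - Real.sin y)
      (Set.Ici 0) := by
    apply monotoneOn_of_hasDerivWithinAt_nonneg (convex_Ici 0)
      (f' := fun y : ℝ => (1 - y ^ 2 / 2 + y ^ 4 / 24) - Real.cos y)
    · fun_prop
    · intro y _
      apply HasDerivAt.hasDerivWithinAt
      have h := ((hasDerivAt_id y).sub ((hasDerivAt_pow 3 y).div_const 6))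
        |>.add ((hasDerivAt_pow 5 y).div_const 120) |>.sub (Real.hasDerivAt_sin y)
      refine h.congr_deriv ?_
      norm_num
      ring
    · intro y hy
      rw [interior_Ici] at hy
      have := cos_taylor_ub y (le_of_lt hy)
      linarith
  have h0 := key (Set.self_mem_Ici) (Set.mem_Ici.2 hx) hx
  simp only [ne_eq, OfNat.ofNat_ne_zero, not_false_eq_true, zero_pow, zero_div, sub_zero,
    add_zero, Real.sin_zero, sub_self] at h0
  linarith

private lemma key_poly (b s : ℝ) (hb_pos : 0 < b) (hbsq : b ^ 2 ≤ 1 / 10)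
    (hs2l : 100 * b ^ 2 ≤ 9 * s ^ 2) (hs2u : s ^ 2 ≤ 16 * b ^ 2) :
    (1 - s ^ 2 / 6 + s ^ 4 / 120) * (1 - b ^ 2 / 2 + b ^ 4 / 24) <
      (1 - b ^ 2 / 6) * (1 - 2 * b ^ 2) := by
  have hAf : 0 ≤ (s ^ 2 - 100 / 9 * b ^ 2) * (1 / 6 - 167 / 540 * b ^ 2) :=
    mul_nonneg (by nlinarith) (by nlinarith)
  have hBf : 0 ≤ (9 * s ^ 2 - 100 * b ^ 2) * (16 * b ^ 2 - s ^ 2) :=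
    mul_nonneg (by linarith) (by linarith)
  have hCf : s ^ 4 ≤ 256 * b ^ 4 := by
    nlinarith [mul_nonneg (sub_nonneg.2 hs2u) (by positivity : (0:ℝ) ≤ s ^ 2 + 16 * b ^ 2)]
  have hDf : s ^ 4 * b ^ 4 ≤ 256 * b ^ 4 * b ^ 4 :=
    mul_le_mul_of_nonneg_right hCf (by positivity)
  have hEf : b ^ 4 ≤ b ^ 2 / 10 := by nlinarith [sq_nonneg b]
  have hFf : b ^ 4 * b ^ 4 ≤ b ^ 2 / 10 * (b ^ 2 / 10) :=
    mul_le_mul hEf hEf (by positivity) (by positivity)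
  have hGf : (0:ℝ) ≤ s ^ 2 * b ^ 4 := by positivity
  have hHf : (0:ℝ) ≤ s ^ 4 * b ^ 2 := by positivity
  nlinarith [hAf, hBf, hDf, hEf, hFf, hGf, hHf, mul_pos hb_pos hb_pos]

private lemma aux_main (N M : ℝ) (hN : 6 ≤ N) (hM : M = N - 1) :
    N / 8 * Real.sin (2 * π / N) < M / 2 * (Real.sin (π / M) - Real.tan (π / (2 * M))) := by
  have hm5 : (5 : ℝ) ≤ M := by rw [hM]; linarith
  have hm_pos : (0 : ℝ) < M := by linarith
  have hn_pos : (0 : ℝ) < N := by linarith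
  have hpi := Real.pi_pos
  have hpi3 := Real.pi_gt_three
  have hpi315 := Real.pi_lt_d2
  obtain ⟨b, hb_def⟩ : ∃ x : ℝ, x = π / (2 * M) := ⟨_, rfl⟩
  obtain ⟨s, hs_def⟩ : ∃ x : ℝ, x = 2 * π / N := ⟨_, rfl⟩
  rw [← hb_def, ← hs_def]
  have hb_pos : 0 < b := by rw [hb_def]; positivity
  have hs_pos : 0 < s := by rw [hs_def]; positivity
  have hb_le : b ≤ 0.315 := by
    rw [hb_def, div_le_iff₀ (by positivity)]
    nlinarith
  have hbsq : b ^ 2 ≤ 1 / 10 := by nlinarith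
  have e1 : 10 * b = 5 * π / M := by
    rw [hb_def, eq_div_iff hm_pos.ne']
    field_simp
    ring
  have e2 : 3 * s = 6 * π / N := by
    rw [hs_def, eq_div_iff hn_pos.ne']
    field_simp
    ring
  have e3 : 4 * b = 2 * π / M := by
    rw [hb_def, eq_div_iff hm_pos.ne']
    field_simp
    ring
  have h1 : 10 * b ≤ 3 * s := by
    rw [e1, e2, div_le_div_iff₀ hm_pos hn_pos]
    nlinarith
  have h2 : s < 4 * b := by
    rw [e3, hs_def, div_lt_div_iff₀ hn_pos hm_pos]
    nlinarith
  have hb_lt_half : b < π / 2 := by nlinarith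
  have hcosb_pos : 0 < Real.cos b := Real.cos_pos_of_mem_Ioo ⟨by linarith, hb_lt_half⟩
  have harg1 : π / M = 2 * b := by
    rw [hb_def]
    field_simp
  rw [harg1]
  have htan_id : Real.sin (2 * b) - Real.tan b =
      Real.sin b / Real.cos b * Real.cos (2 * b) := by
    rw [Real.sin_two_mul, Real.cos_two_mul, Real.tan_eq_sin_div_cos]
    field_simp
  rw [htan_id]
  have hsinb_lb : b - b ^ 3 / 6 ≤ Real.sin b := sin_taylor_lb b hb_pos.le
  have hcosb_ub : Real.cos b ≤ 1 - b ^ 2 / 2 + b ^ 4 / 24 := cos_taylor_ub b hb_pos.le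
  have hcos2b_lb : 1 - 2 * b ^ 2 ≤ Real.cos (2 * b) := by
    have := Real.one_sub_sq_div_two_le_cos (x := 2 * b)
    nlinarith
  have hsins_ub : Real.sin s ≤ s - s ^ 3 / 6 + s ^ 5 / 120 := sin_taylor_ub s hs_pos.le
  have hsins_nonneg : 0 ≤ Real.sin s := by
    apply Real.sin_nonneg_of_nonneg_of_le_pi hs_pos.le
    rw [hs_def, div_le_iff₀ hn_pos]
    nlinarith [mul_le_mul_of_nonneg_left hN hpi.le]
  have hD_pos : 0 < 1 - b ^ 2 / 2 + b ^ 4 / 24 := lt_of_lt_of_le hcosb_pos hcosb_ub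
  have hnum_nonneg : 0 ≤ b - b ^ 3 / 6 := by nlinarith
  have hcos2b_pos : (0:ℝ) < 1 - 2 * b ^ 2 := by nlinarith
  have hs2l : 100 * b ^ 2 ≤ 9 * s ^ 2 := by nlinarith
  have hs2u : s ^ 2 ≤ 16 * b ^ 2 := by nlinarith
  have key : (1 - s ^ 2 / 6 + s ^ 4 / 120) * (1 - b ^ 2 / 2 + b ^ 4 / 24) <
      (1 - b ^ 2 / 6) * (1 - 2 * b ^ 2) :=
    key_poly b s hb_pos hbsq hs2l hs2u
  have hns : N * s = 2 * π := by
    rw [hs_def]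
    field_simp
  have hmb : M * b = π / 2 := by
    rw [hb_def]
    field_simp
  have lhs_le : N / 8 * Real.sin s ≤ π / 4 * (1 - s ^ 2 / 6 + s ^ 4 / 120) := by
    have heq : N / 8 * (s - s ^ 3 / 6 + s ^ 5 / 120) =
        π / 4 * (1 - s ^ 2 / 6 + s ^ 4 / 120) := by
      have hn_eq : N = 2 * π / s := by
        rw [eq_div_iff hs_pos.ne']; exact hns
      rw [hn_eq]
      field_simp
      ring
    calc N / 8 * Real.sin s ≤ N / 8 * (s - s ^ 3 / 6 + s ^ 5 / 120) := by
          apply mul_le_mul_of_nonneg_left hsins_ub (by positivity)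
      _ = _ := heq
  have hsinb_pos : 0 < Real.sin b := lt_of_lt_of_le (by nlinarith) hsinb_lb
  have htan_lb : (b - b ^ 3 / 6) / (1 - b ^ 2 / 2 + b ^ 4 / 24) ≤ Real.sin b / Real.cos b :=
    div_le_div₀ hsinb_pos.le hsinb_lb hcosb_pos hcosb_ub
  have htan_lb_nonneg : 0 ≤ (b - b ^ 3 / 6) / (1 - b ^ 2 / 2 + b ^ 4 / 24) := by positivity
  have rhs_ge : M / 2 * ((b - b ^ 3 / 6) / (1 - b ^ 2 / 2 + b ^ 4 / 24) * (1 - 2 * b ^ 2)) ≤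
      M / 2 * (Real.sin b / Real.cos b * Real.cos (2 * b)) := by
    apply mul_le_mul_of_nonneg_left _ (by positivity)
    exact mul_le_mul htan_lb hcos2b_lb hcos2b_pos.le (htan_lb_nonneg.trans htan_lb)
  have hmid : π / 4 * (1 - s ^ 2 / 6 + s ^ 4 / 120) <
      M / 2 * ((b - b ^ 3 / 6) / (1 - b ^ 2 / 2 + b ^ 4 / 24) * (1 - 2 * b ^ 2)) := by
    have step : M / 2 * ((b - b ^ 3 / 6) / (1 - b ^ 2 / 2 + b ^ 4 / 24) * (1 - 2 * b ^ 2)) =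
        M / 2 * ((b - b ^ 3 / 6) * (1 - 2 * b ^ 2)) / (1 - b ^ 2 / 2 + b ^ 4 / 24) := by
      ring
    rw [step, lt_div_iff₀ hD_pos]
    have hrhs_eq : M / 2 * ((b - b ^ 3 / 6) * (1 - 2 * b ^ 2)) =
        π / 4 * ((1 - b ^ 2 / 6) * (1 - 2 * b ^ 2)) := by
      linear_combination ((1 - 2 * b ^ 2) * (1 - b ^ 2 / 6) / 2) * hmb
    rw [hrhs_eq]
    nlinarith [key, hpi]
  calc N / 8 * Real.sin s ≤ π / 4 * (1 - s ^ 2 / 6 + s ^ 4 / 120) := lhs_le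
    _ < M / 2 * ((b - b ^ 3 / 6) / (1 - b ^ 2 / 2 + b ^ 4 / 24) * (1 - 2 * b ^ 2)) := hmid
    _ ≤ _ := rhs_ge

/-- For every even `n ≥ 6`, the area of the regular small `n`-gon is strictly less than
the area of the regular small `(n-1)`-gon. -/
theorem area_regular_even_lt_odd (n : ℕ) (hn : 6 ≤ n) (heven : Even n) :
    (n / 8 : ℝ) * Real.sin (2 * π / n) <
      ((n : ℝ) - 1) / 2 *
        (Real.sin (π / ((n : ℝ) - 1)) - Real.tan (π / (2 * ((n : ℝ) - 1)))) :=
  aux_main (n : ℝ) ((n : ℝ) - 1) (by exact_mod_cast hn) rfl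
end

section
/- For every odd integer m ≥ 5 (writing n = m+1 even), the quantity A(R_m^+) := (m/2)·(sin(π/m) − tan(π/(2m))) + sin(π/(2m)) − (1/2)·sin(π/m) is strictly greater than the area (n/8)·sin(2π/n) of the regular small n-gon, where n = m+1. -/
open Real
open Set

lemma sin_ge_cubic {t : ℝ} (ht : 0 ≤ t) : t - t^3/6 ≤ Real.sin t := by
  have mono : MonotoneOn (fun s : ℝ => Real.sin s - (s - s^3/6)) (Set.Ici 0) := by
    apply monotoneOn_of_deriv_nonneg (convex_Ici 0)
    · fun_prop
    · intro s hs
      exact ((Real.differentiable_sin s).sub (by fun_prop)).differentiableWithinAt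
    · intro s hs
      have hd : HasDerivAt (fun s : ℝ => Real.sin s - (s - s^3/6))
          (Real.cos s - (1 - (3:ℕ) * s^2 / 6)) s := by
        have h1 : HasDerivAt (fun s : ℝ => s - s^3/6) (1 - (3:ℕ)*s^2/6) s := by
          exact (hasDerivAt_id s).sub ((hasDerivAt_pow 3 s).div_const 6)
        exact (Real.hasDerivAt_sin s).sub h1
      rw [hd.deriv]
      have := Real.one_sub_sq_div_two_le_cos (x := s)
      push_cast
      nlinarith
  simpa using mono (Set.self_mem_Ici) (Set.mem_Ici.2 ht) ht

lemma cos_le_quartic {t : ℝ} (ht : 0 ≤ t) : Real.cos t ≤ 1 - t^2/2 + t^4/24 := by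
  have mono : MonotoneOn (fun s : ℝ => (1 - s^2/2 + s^4/24) - Real.cos s) (Set.Ici 0) := by
    apply monotoneOn_of_deriv_nonneg (convex_Ici 0)
    · fun_prop
    · intro s hs
      exact ((by fun_prop : Differentiable ℝ fun s : ℝ => (1 - s^2/2 + s^4/24)) s |>.sub
        (Real.differentiable_cos s)).differentiableWithinAt
    · intro s hs
      rw [interior_Ici] at hs
      have hs0 : 0 ≤ s := le_of_lt hs
      have hd : HasDerivAt (fun s : ℝ => (1 - s^2/2 + s^4/24) - Real.cos s)
          ((0 - (2:ℕ)*s^1/2 + (4:ℕ)*s^3/24) - (-Real.sin s)) s := by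
        have h1 : HasDerivAt (fun s : ℝ => 1 - s^2/2 + s^4/24)
            (0 - (2:ℕ)*s^1/2 + (4:ℕ)*s^3/24) s := by
          exact ((hasDerivAt_const s (1:ℝ)).sub ((hasDerivAt_pow 2 s).div_const 2)).add
            ((hasDerivAt_pow 4 s).div_const 24)
        exact h1.sub (Real.hasDerivAt_cos s)
      rw [hd.deriv]
      have := sin_ge_cubic hs0
      push_cast
      nlinarith
  simpa using mono (Set.self_mem_Ici) (Set.mem_Ici.2 ht) ht

lemma sin_le_quintic {t : ℝ} (ht : 0 ≤ t) : Real.sin t ≤ t - t^3/6 + t^5/120 := by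
  have mono : MonotoneOn (fun s : ℝ => (s - s^3/6 + s^5/120) - Real.sin s) (Set.Ici 0) := by
    apply monotoneOn_of_deriv_nonneg (convex_Ici 0)
    · fun_prop
    · intro s hs
      exact ((by fun_prop : Differentiable ℝ fun s : ℝ => (s - s^3/6 + s^5/120)) s |>.sub
        (Real.differentiable_sin s)).differentiableWithinAt
    · intro s hs
      rw [interior_Ici] at hs
      have hs0 : 0 ≤ s := le_of_lt hs
      have hd : HasDerivAt (fun s : ℝ => (s - s^3/6 + s^5/120) - Real.sin s)
          ((1 - (3:ℕ)*s^2/6 + (5:ℕ)*s^4/120) - Real.cos s) s := by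
        have h1 : HasDerivAt (fun s : ℝ => s - s^3/6 + s^5/120)
            (1 - (3:ℕ)*s^2/6 + (5:ℕ)*s^4/120) s := by
          exact (((hasDerivAt_id s).sub ((hasDerivAt_pow 3 s).div_const 6)).add
            ((hasDerivAt_pow 5 s).div_const 120))
        exact h1.sub (Real.hasDerivAt_sin s)
      rw [hd.deriv]
      have := cos_le_quartic hs0
      push_cast
      nlinarith
  simpa using mono (Set.self_mem_Ici) (Set.mem_Ici.2 ht) ht

lemma tan_le_quintic {t : ℝ} (ht : 0 ≤ t) (ht' : t ≤ 0.315) :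
    Real.tan t ≤ t + t^3/3 + (19/100)*t^5 := by
  have hc : 0 < Real.cos t := by
    apply Real.cos_pos_of_mem_Ioo
    constructor
    · nlinarith [Real.pi_gt_d6]
    · nlinarith [Real.pi_gt_d6]
  rw [Real.tan_eq_sin_div_cos, div_le_iff₀ hc]
  have h1 : Real.sin t ≤ t - t^3/6 + t^5/120 := sin_le_quintic ht
  have h2 : 1 - t^2/2 ≤ Real.cos t := Real.one_sub_sq_div_two_le_cos
  have hpoly : 0 ≤ t + t^3/3 + (19/100)*t^5 := by positivity
  have key := mul_le_mul_of_nonneg_left h2 hpoly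
  have ht2 : t^2 ≤ 3/19 := by nlinarith
  have hlast : 0 ≤ t^5 * (3/200 - (19/200)*t^2) := by
    apply mul_nonneg (pow_nonneg ht 5); linarith
  nlinarith [key, h1, hlast]

set_option maxHeartbeats 1000000 in
lemma main_real (M : ℝ) (hM : 5 ≤ M) :
    (M + 1) / 8 * Real.sin (2 * π / (M + 1)) <
      M / 2 * (Real.sin (π / M) - Real.tan (π / (2 * M)))
        + Real.sin (π / (2 * M)) - (1 / 2) * Real.sin (π / M) := by
  have hM0 : (0:ℝ) < M := by linarith
  have hM1 : (0:ℝ) < M + 1 := by linarith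
  have hMne : M ≠ 0 := ne_of_gt hM0
  have hM1ne : M + 1 ≠ 0 := ne_of_gt hM1
  have hπ : (0:ℝ) < π := Real.pi_pos
  have hπ315 : π < 3.15 := Real.pi_lt_d2
  have hπ2 : π^2 ≤ 10 := by nlinarith
  obtain ⟨x, hxdef⟩ : ∃ x : ℝ, x = π / M := ⟨_, rfl⟩
  obtain ⟨hh, hhdef⟩ : ∃ hh : ℝ, hh = π / (2 * M) := ⟨_, rfl⟩
  obtain ⟨y, hydef⟩ : ∃ y : ℝ, y = 2 * π / (M + 1) := ⟨_, rfl⟩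
  rw [← hxdef, ← hhdef, ← hydef]
  have hx0 : 0 ≤ x := by rw [hxdef]; positivity
  have hh0 : 0 ≤ hh := by rw [hhdef]; positivity
  have hy0 : 0 ≤ y := by rw [hydef]; positivity
  have hh315 : hh ≤ 0.315 := by
    rw [hhdef, div_le_iff₀ (by positivity)]
    nlinarith
  have bsiny : Real.sin y ≤ y - y^3/6 + y^5/120 := sin_le_quintic hy0
  have bsinx_lo : x - x^3/6 ≤ Real.sin x := sin_ge_cubic hx0
  have bsinx_hi : Real.sin x ≤ x - x^3/6 + x^5/120 := sin_le_quintic hx0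
  have bsinh : hh - hh^3/6 ≤ Real.sin hh := sin_ge_cubic hh0
  have btan : Real.tan hh ≤ hh + hh^3/3 + (19/100)*hh^5 := tan_le_quintic hh0 hh315
  -- closed forms
  have e1 : (M+1)/8 * (y - y^3/6 + y^5/120)
      = π/4 - π^3/(6*(M+1)^2) + π^5/(30*(M+1)^4) := by
    rw [hydef]; field_simp; ring
  have e2 : (M/2) * ((x - x^3/6) - (hh + hh^3/3 + (19/100)*hh^5))
      = π/4 - 5*π^3/(48*M^2) - (19/6400)*π^5/M^4 := by
    rw [hxdef, hhdef]; field_simp; ring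
  have e3 : (hh - hh^3/6) - (1/2)*(x - x^3/6 + x^5/120)
      = π^3/(16*M^3) - π^5/(240*M^5) := by
    rw [hxdef, hhdef]; field_simp; ring
  -- key numeric inequality
  have key : π/4 - π^3/(6*(M+1)^2) + π^5/(30*(M+1)^4)
      < π/4 - 5*π^3/(48*M^2) - (19/6400)*π^5/M^4 + (π^3/(16*M^3) - π^5/(240*M^5)) := by
    rw [← sub_pos]
    have heq2 : (π/4 - 5*π^3/(48*M^2) - (19/6400)*π^5/M^4 + (π^3/(16*M^3) - π^5/(240*M^5)))
        - (π/4 - π^3/(6*(M+1)^2) + π^5/(30*(M+1)^4))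
        = (π^3 * (M^5*(M+1)^2/6 + M^2*(M+1)^4/16 - 5*M^3*(M+1)^4/48)
            - π^5 * ((M+1)^4/240 + (19/6400)*M*(M+1)^4 + M^5/30)) / (M^5*(M+1)^4) := by
      field_simp
      ring
    rw [heq2]
    apply div_pos _ (by positivity)
    have hs : (0:ℝ) ≤ M - 5 := by linarith
    have hQ' : (0:ℝ) ≤ (M+1)^4/240 + (19/6400)*M*(M+1)^4 + M^5/30 := by positivity
    have hB : π^5 ≤ 10 * π^3 := by nlinarith [pow_pos hπ 3]
    have h5 : π^5 * ((M+1)^4/240 + (19/6400)*M*(M+1)^4 + M^5/30)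
        ≤ 10*π^3 * ((M+1)^4/240 + (19/6400)*M*(M+1)^4 + M^5/30) :=
      mul_le_mul_of_nonneg_right hB hQ'
    have hpos : 0 < π^3 * ((M^5*(M+1)^2/6 + M^2*(M+1)^4/16 - 5*M^3*(M+1)^4/48)
        - 10*((M+1)^4/240 + (19/6400)*M*(M+1)^4 + M^5/30)) := by
      apply mul_pos (by positivity)
      nlinarith [pow_nonneg hs 7, pow_nonneg hs 6, pow_nonneg hs 5, pow_nonneg hs 4,
        pow_nonneg hs 3, pow_nonneg hs 2, hs]
    nlinarith [h5, hpos]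
  -- assembly
  have b1 : (M+1)/8 * Real.sin y ≤ (M+1)/8 * (y - y^3/6 + y^5/120) :=
    mul_le_mul_of_nonneg_left bsiny (by positivity)
  have b2 : (M/2) * ((x - x^3/6) - (hh + hh^3/3 + (19/100)*hh^5))
      ≤ (M/2) * (Real.sin x - Real.tan hh) :=
    mul_le_mul_of_nonneg_left (by linarith) (by positivity)
  linarith [b1, b2, key, bsinh, bsinx_hi, e1, e2, e3]



/-- For every odd `m ≥ 5`, the area of `R_m⁺` (the regular small `m`-gon augmented with one
vertex at distance 1 along the mediatrix of an angle) is strictly greater than the area of the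
regular small `(m+1)`-gon. -/
theorem area_Rplus_gt_regular (m : ℕ) (hm : 5 ≤ m) (hodd : Odd m) :
    ((m : ℝ) + 1) / 8 * Real.sin (2 * π / ((m : ℝ) + 1)) <
      (m / 2 : ℝ) * (Real.sin (π / m) - Real.tan (π / (2 * m)))
        + Real.sin (π / (2 * m)) - (1 / 2) * Real.sin (π / m) := by
  exact main_real (m : ℝ) (by exact_mod_cast hm)
end

section
/- Let g_i, h_i (i = 0,…,m) be convex differentiable functions on ℝ^d, and let c satisfy g_i(c) − h_i(c) ≥ 0 for all i = 1,…,m. Then c is feasible for the linearized problem (i.e., ḡ_i(c;c) − h_i(c) ≥ 0 for all i, where ḡ_i(z;c) = g_i(c) + ∇g_i(c)ᵀ(z−c)). Moreover, if z* maximizes ḡ_0(z;c) − h_0(z) over the linearized feasible set {z : ḡ_i(z;c) − h_i(z) ≥ 0 ∀i}, then g_0(c) − h_0(c) ≤ g_0(z*) − h_0(z*). -/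
open Real
open scoped RealInnerProductSpace

lemma grad_support {d : ℕ} (f : EuclideanSpace ℝ (Fin d) → ℝ)
    (hf : ConvexOn ℝ Set.univ f) (hfd : Differentiable ℝ f)
    (c z : EuclideanSpace ℝ (Fin d)) :
    f c + ⟪gradient f c, z - c⟫ ≤ f z := by
  set φ : ℝ → ℝ := fun t => f (c + t • (z - c)) with hφ
  have hline : ∀ t : ℝ, (AffineMap.lineMap c z : ℝ →ᵃ[ℝ] _) t = c + t • (z - c) := by
    intro t; simp [AffineMap.lineMap_apply]; abel
  have hconv : ConvexOn ℝ Set.univ φ := by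
    have := hf.comp_affineMap (AffineMap.lineMap c z : ℝ →ᵃ[ℝ] _)
    convert this using 1
    iterate 4 rfl
    · simp
    funext t
    simp [hφ, Function.comp, hline t]
  have hderline : HasDerivAt (fun t : ℝ => c + t • (z - c)) (z - c) 0 := by
    simpa using ((hasDerivAt_id (0:ℝ)).smul_const (z - c)).const_add c
  have hgrad : HasGradientAt f (gradient f c) c := (hfd c).hasGradientAt
  have hfderiv : HasFDerivAt f (InnerProductSpace.toDual ℝ _ (gradient f c)) c := hgrad
  have hder : HasDerivAt φ (⟪gradient f c, z - c⟫) 0 := by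
    have hc0 : c + (0:ℝ) • (z - c) = c := by simp
    rw [← hc0] at hfderiv
    have := hfderiv.comp_hasDerivAt 0 hderline
    simpa [hφ, Function.comp_def, InnerProductSpace.toDual_apply_apply] using this
  have hslope := hconv.le_slope_of_hasDerivAt (Set.mem_univ (0:ℝ)) (Set.mem_univ (1:ℝ))
    one_pos hder
  have : ⟪gradient f c, z - c⟫ ≤ φ 1 - φ 0 := by
    simpa [slope_def_field] using hslope
  simp only [hφ, one_smul, zero_smul, add_zero] at this
  have h1 : c + (z - c) = z := by abel
  rw [h1] at this
  linarith

/-- Ascent property of the concave-convex procedure: if `c` is feasible for the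
difference-of-convex problem `max g₀ - h₀ s.t. gᵢ - hᵢ ≥ 0 (i = 1,…,m)`, then `c` is feasible
for the convex restriction linearized at `c`, and any maximizer `z*` of the linearized problem
satisfies `g₀ c - h₀ c ≤ g₀ z* - h₀ z*`. -/
theorem ccp_ascent (d m : ℕ) (g h : ℕ → EuclideanSpace ℝ (Fin d) → ℝ)
    (hg : ∀ i ≤ m, ConvexOn ℝ Set.univ (g i)) (hgd : ∀ i ≤ m, Differentiable ℝ (g i))
    (hh : ∀ i ≤ m, ConvexOn ℝ Set.univ (h i)) (hhd : ∀ i ≤ m, Differentiable ℝ (h i))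
    (c : EuclideanSpace ℝ (Fin d))
    (hc : ∀ i, 1 ≤ i → i ≤ m → 0 ≤ g i c - h i c) :
    (∀ i, 1 ≤ i → i ≤ m →
        0 ≤ (g i c + ⟪gradient (g i) c, c - c⟫) - h i c) ∧
    (∀ zstar : EuclideanSpace ℝ (Fin d),
      (∀ i, 1 ≤ i → i ≤ m →
          0 ≤ (g i c + ⟪gradient (g i) c, zstar - c⟫) - h i zstar) →
      (∀ z, (∀ i, 1 ≤ i → i ≤ m →
            0 ≤ (g i c + ⟪gradient (g i) c, z - c⟫) - h i z) →
          (g 0 c + ⟪gradient (g 0) c, z - c⟫) - h 0 z ≤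
            (g 0 c + ⟪gradient (g 0) c, zstar - c⟫) - h 0 zstar) →
      g 0 c - h 0 c ≤ g 0 zstar - h 0 zstar) := by
  have hfeas : ∀ i, 1 ≤ i → i ≤ m →
      0 ≤ (g i c + ⟪gradient (g i) c, c - c⟫) - h i c := by
    intro i h1 h2
    simpa using hc i h1 h2
  refine ⟨hfeas, fun zstar hzfeas hmax => ?_⟩
  have hcz := hmax c hfeas
  have h0 : (g 0 c + ⟪gradient (g 0) c, zstar - c⟫) ≤ g 0 zstar :=
    grad_support (g 0) (hg 0 (Nat.zero_le m)) (hgd 0 (Nat.zero_le m)) c zstar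
  have hcc : g 0 c - h 0 c ≤ (g 0 c + ⟪gradient (g 0) c, zstar - c⟫) - h 0 zstar := by
    simpa using hcz
  linarith
end

section
/- The area of the hexagon R_5^+ with vertices as above equals (5/2)·(sin(π/5) − tan(π/10)) + sin(π/10) − (1/2)·sin(π/5) ≈ 0.672288, which is strictly greater than (6/8)·sin(π/3) = 3√3/8 ≈ 0.649519, the area of the regular small hexagon. -/
open Real MeasureTheory

/-- The vertices of the hexagon `R₅⁺`: the regular small pentagon of unit diameter
(circumradius `1/(2 cos (π/10))`, with one vertex at the origin) together with the
added vertex `(0, 1)`. -/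
noncomputable def R5plus : Fin 6 → ℝ × ℝ
  | 0 => (0, 0)
  | 1 => (Real.sin (2 * π / 5) / (2 * Real.cos (π / 10)),
          (1 - Real.cos (2 * π / 5)) / (2 * Real.cos (π / 10)))
  | 2 => (Real.sin (4 * π / 5) / (2 * Real.cos (π / 10)),
          (1 - Real.cos (4 * π / 5)) / (2 * Real.cos (π / 10)))
  | 3 => (0, 1)
  | 4 => (-(Real.sin (4 * π / 5) / (2 * Real.cos (π / 10))),
          (1 - Real.cos (4 * π / 5)) / (2 * Real.cos (π / 10)))
  | 5 => (-(Real.sin (2 * π / 5) / (2 * Real.cos (π / 10))),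
          (1 - Real.cos (2 * π / 5)) / (2 * Real.cos (π / 10)))

open Set

noncomputable def sg : ℝ := Real.sin (π/10)
noncomputable def gm : ℝ := Real.cos (π/10)
noncomputable def qq : ℝ := (1 - sg)/(2*gm)
noncomputable def mm : ℝ := (qq - gm)/(1/2 - sg)

lemma gm_pos : 0 < gm := Real.cos_pos_of_mem_Ioo (by constructor <;> nlinarith [pi_pos, pi_lt_d2])

lemma sg_eq : sg = (Real.sqrt 5 - 1)/4 := by
  have h5 : Real.sqrt 5 ^ 2 = 5 := Real.sq_sqrt (by norm_num)
  have h5' : (2:ℝ) < Real.sqrt 5 := by nlinarith [Real.sqrt_nonneg 5]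
  have hc : Real.cos (π/5) = (1 + Real.sqrt 5)/4 := Real.cos_pi_div_five
  have hd : Real.cos (2 * (π/10)) = Real.cos (π/10) ^ 2 - Real.sin (π/10) ^ 2 :=
    Real.cos_two_mul' (π/10)
  have h2 : (2 : ℝ) * (π/10) = π/5 := by ring
  have h1 := Real.sin_sq_add_cos_sq (π/10)
  rw [h2, hc] at hd
  have hsq : sg ^ 2 = ((Real.sqrt 5 - 1)/4) ^ 2 := by rw [sg]; nlinarith
  have hpos : 0 ≤ sg := Real.sin_nonneg_of_nonneg_of_le_pi (by positivity) (by nlinarith [pi_pos])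
  nlinarith [hsq, hpos, h5']

lemma gm_sq : gm ^ 2 = 1 - sg ^ 2 := by
  have h1 := Real.sin_sq_add_cos_sq (π/10); rw [gm, sg]; nlinarith

lemma sg_bounds : 0.309016 < sg ∧ sg < 0.309018 := by
  have h5 : Real.sqrt 5 ^ 2 = 5 := Real.sq_sqrt (by norm_num)
  have h0 : (0:ℝ) ≤ Real.sqrt 5 := Real.sqrt_nonneg 5
  rw [sg_eq]; constructor <;> nlinarith

lemma gm_bounds : 0.951056 < gm ∧ gm < 0.951057 := by
  have h := gm_sq
  have hs := sg_bounds
  have := gm_pos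
  constructor <;> nlinarith [hs.1, hs.2]

lemma qq_bounds : 0.36327 < qq ∧ qq < 0.363272 := by
  have hs := sg_bounds; have hg := gm_bounds; have hgp := gm_pos
  rw [qq]; constructor
  · rw [lt_div_iff₀ (by nlinarith)]; nlinarith
  · rw [div_lt_iff₀ (by nlinarith)]; nlinarith

lemma mm_bounds : -3.07771 < mm ∧ mm < -3.07766 := by
  have hs := sg_bounds; have hq := qq_bounds; have hg := gm_bounds
  rw [mm]; constructor
  · rw [lt_div_iff₀ (by nlinarith)]; nlinarith
  · rw [div_lt_iff₀ (by nlinarith)]; nlinarith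

noncomputable def l1 (x:ℝ) : ℝ := ((gm-1)/sg)*x + 1
noncomputable def l2 (x:ℝ) : ℝ := mm*x + (gm - sg*mm)
noncomputable def l3 (x:ℝ) : ℝ := ((1-gm)/sg)*x + 1
noncomputable def l4 (x:ℝ) : ℝ := (-mm)*x + (gm - sg*mm)
noncomputable def fU (x:ℝ) : ℝ := min (min (l1 x) (l2 x)) (min (l3 x) (l4 x))
noncomputable def fL (x:ℝ) : ℝ := 2*qq*|x|

lemma slope1_bounds : -0.15839 < (gm-1)/sg ∧ (gm-1)/sg < -0.15838 := by
  have hs := sg_bounds; have hg := gm_bounds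
  constructor
  · rw [lt_div_iff₀ (by nlinarith)]; nlinarith
  · rw [div_lt_iff₀ (by nlinarith)]; nlinarith

lemma sg_ne : sg ≠ 0 := by nlinarith [sg_bounds.1]
lemma hc1 : ((gm-1)/sg)*sg = gm - 1 := div_mul_cancel₀ _ sg_ne
lemma hc3 : ((1-gm)/sg)*sg = 1 - gm := div_mul_cancel₀ _ sg_ne
lemma hsl3 : (1-gm)/sg = -((gm-1)/sg) := by ring
lemma hc2 : mm*(1/2-sg) = qq - gm := by
  rw [mm, div_mul_cancel₀]; nlinarith [sg_bounds.2]

lemma affine_nonneg {c d lo hi x : ℝ} (h1 : 0 ≤ c*lo+d) (h2 : 0 ≤ c*hi+d)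
    (hx1 : lo ≤ x) (hx2 : x ≤ hi) : 0 ≤ c*x+d := by
  rcases le_total c 0 with h|h <;> nlinarith

lemma l1_key : ∀ x ∈ Icc (0:ℝ) sg, fU x = l1 x := by
  intro x hx
  have hs := sg_bounds; have hg := gm_bounds; have hq := qq_bounds; have hm := mm_bounds
  have hsl := slope1_bounds; have h1 := hc1
  have e2 : l1 x ≤ l2 x := by
    have := affine_nonneg (c := mm - (gm-1)/sg) (d := gm - sg*mm - 1) (lo := 0) (hi := sg) (x := x)
      (by nlinarith) (by nlinarith) hx.1 hx.2
    simp only [l1, l2]; nlinarith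
  have e3 : l1 x ≤ l3 x := by
    have := affine_nonneg (c := (1-gm)/sg - (gm-1)/sg) (d := 0) (lo := 0) (hi := sg) (x := x)
      (by nlinarith [hc3, hc1]) (by nlinarith [hc3, hc1]) hx.1 hx.2
    simp only [l1, l3]; nlinarith
  have e4 : l1 x ≤ l4 x := by
    have := affine_nonneg (c := -mm - (gm-1)/sg) (d := gm - sg*mm - 1) (lo := 0) (hi := sg) (x := x)
      (by nlinarith) (by nlinarith) hx.1 hx.2
    simp only [l1, l4]; nlinarith
  simp only [fU]
  rw [min_eq_left e2, min_eq_left (le_min e3 e4)]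

lemma l2_key : ∀ x ∈ Icc sg (1/2:ℝ), fU x = l2 x := by
  intro x hx
  have hs := sg_bounds; have hg := gm_bounds; have hq := qq_bounds; have hm := mm_bounds
  have hsl := slope1_bounds; have h1 := hc1; have h3 := hc3; have h4 := hsl3
  have e1 : l2 x ≤ l1 x := by
    have := affine_nonneg (c := (gm-1)/sg - mm) (d := 1 - gm + sg*mm) (lo := sg) (hi := 1/2) (x := x)
      (by nlinarith) (by nlinarith) hx.1 hx.2
    simp only [l1, l2]; nlinarith
  have e3 : l2 x ≤ l3 x := by
    have := affine_nonneg (c := (1-gm)/sg - mm) (d := 1 - gm + sg*mm) (lo := sg) (hi := 1/2) (x := x)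
      (by nlinarith [h3, h4]) (by nlinarith [h3, h4]) hx.1 hx.2
    simp only [l2, l3]; nlinarith
  have e4 : l2 x ≤ l4 x := by
    have := affine_nonneg (c := -mm - mm) (d := 0) (lo := sg) (hi := 1/2) (x := x)
      (by nlinarith) (by nlinarith) hx.1 hx.2
    simp only [l2, l4]; nlinarith
  simp only [fU]
  rw [min_eq_right e1, min_eq_left (le_min e3 e4)]

lemma l1_neg (x : ℝ) : l1 (-x) = l3 x := by simp only [l1, l3]; ring
lemma l2_neg (x : ℝ) : l2 (-x) = l4 x := by simp only [l2, l4]; ring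
lemma l3_neg (x : ℝ) : l3 (-x) = l1 x := by simp only [l1, l3]; ring
lemma l4_neg (x : ℝ) : l4 (-x) = l2 x := by simp only [l2, l4]; ring

lemma fU_neg (x : ℝ) : fU (-x) = fU x := by
  simp only [fU, l1_neg, l2_neg, l3_neg, l4_neg]; rw [min_comm]

lemma fL_neg (x : ℝ) : fL (-x) = fL x := by simp only [fL, abs_neg]

lemma fL_le_fU : ∀ x ∈ Icc (-(1/2):ℝ) (1/2), fL x ≤ fU x := by
  have key : ∀ x ∈ Icc (0:ℝ) (1/2), fL x ≤ fU x := by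
    intro x hx
    have hs := sg_bounds; have hg := gm_bounds; have hq := qq_bounds; have hm := mm_bounds
    have hsl := slope1_bounds; have h1 := hc1; have h2 := hc2
    have habs : |x| = x := abs_of_nonneg hx.1
    rcases le_total x sg with h|h
    · rw [l1_key x ⟨hx.1, h⟩]
      have := affine_nonneg (c := (gm-1)/sg - 2*qq) (d := 1) (lo := 0) (hi := sg) (x := x)
        (by nlinarith) (by nlinarith) hx.1 h
      simp only [fL, l1, habs]; nlinarith
    · rw [l2_key x ⟨h, hx.2⟩]
      have := affine_nonneg (c := mm - 2*qq) (d := gm - sg*mm) (lo := sg) (hi := 1/2) (x := x)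
        (by nlinarith) (by nlinarith) h hx.2
      simp only [fL, l2, habs]; nlinarith
  intro x hx
  rcases le_total 0 x with h|h
  · exact key x ⟨h, hx.2⟩
  · rw [← fL_neg, ← fU_neg]; exact key (-x) ⟨by linarith, by linarith [hx.1]⟩

noncomputable def SS : Set (ℝ×ℝ) :=
  {p | p.1 ∈ Icc (-(1/2):ℝ) (1/2) ∧ p.2 ∈ Icc (fL p.1) (fU p.1)}

lemma comb_affine (c d : ℝ) {a b x y fx fy : ℝ} (ha : 0 ≤ a) (hb : 0 ≤ b) (hab : a+b=1)
    (hx : fx ≤ c*x+d) (hy : fy ≤ c*y+d) : a*fx + b*fy ≤ c*(a*x+b*y)+d := by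
  have h1 : a*fx ≤ a*(c*x+d) := mul_le_mul_of_nonneg_left hx ha
  have h2 : b*fy ≤ b*(c*y+d) := mul_le_mul_of_nonneg_left hy hb
  have h3 : a*(c*x+d) + b*(c*y+d) = c*(a*x+b*y)+d := by linear_combination d*hab
  linarith

lemma fU_concave_comb {a b x y : ℝ} (ha : 0 ≤ a) (hb : 0 ≤ b) (hab : a+b=1) :
    a * fU x + b * fU y ≤ fU (a*x+b*y) := by
  have h1x : fU x ≤ l1 x := min_le_of_left_le (min_le_left _ _)
  have h2x : fU x ≤ l2 x := min_le_of_left_le (min_le_right _ _)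
  have h3x : fU x ≤ l3 x := min_le_of_right_le (min_le_left _ _)
  have h4x : fU x ≤ l4 x := min_le_of_right_le (min_le_right _ _)
  have h1y : fU y ≤ l1 y := min_le_of_left_le (min_le_left _ _)
  have h2y : fU y ≤ l2 y := min_le_of_left_le (min_le_right _ _)
  have h3y : fU y ≤ l3 y := min_le_of_right_le (min_le_left _ _)
  have h4y : fU y ≤ l4 y := min_le_of_right_le (min_le_right _ _)
  simp only [l1, l2, l3, l4] at *
  exact le_min (le_min (comb_affine _ _ ha hb hab h1x h1y) (comb_affine _ _ ha hb hab h2x h2y))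
    (le_min (comb_affine _ _ ha hb hab h3x h3y) (comb_affine _ _ ha hb hab h4x h4y))

lemma fL_convex_comb {a b x y : ℝ} (ha : 0 ≤ a) (hb : 0 ≤ b) (hab : a+b=1) :
    fL (a*x+b*y) ≤ a * fL x + b * fL y := by
  have h := abs_add_le (a*x) (b*y)
  have hq := qq_bounds.1
  simp only [fL]
  rw [abs_mul a x, abs_mul b y, abs_of_nonneg ha, abs_of_nonneg hb] at h
  nlinarith

lemma SS_convex : Convex ℝ SS := by
  rintro p hp r hr a b ha hb hab
  obtain ⟨⟨hp1, hp2⟩, ⟨hp3, hp4⟩⟩ := hp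
  obtain ⟨⟨hr1, hr2⟩, ⟨hr3, hr4⟩⟩ := hr
  have hfst : (a • p + b • r).1 = a * p.1 + b * r.1 := rfl
  have hsnd : (a • p + b • r).2 = a * p.2 + b * r.2 := rfl
  refine ⟨⟨?_, ?_⟩, ?_, ?_⟩
  · rw [hfst]; nlinarith
  · rw [hfst]; nlinarith
  · rw [hfst, hsnd]
    calc fL (a*p.1+b*r.1) ≤ a * fL p.1 + b * fL r.1 := fL_convex_comb ha hb hab
    _ ≤ a * p.2 + b * r.2 := by nlinarith
  · rw [hfst, hsnd]
    calc a * p.2 + b * r.2 ≤ a * fU p.1 + b * fU r.1 := by nlinarith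
    _ ≤ fU (a*p.1+b*r.1) := fU_concave_comb ha hb hab

lemma gm_ne : gm ≠ 0 := ne_of_gt gm_pos

lemma trig1 : Real.sin (2*π/5) = gm := by
  rw [show (2*π/5:ℝ) = π/2 - π/10 by ring, Real.sin_pi_div_two_sub]; rfl
lemma trig2 : Real.cos (2*π/5) = sg := by
  rw [show (2*π/5:ℝ) = π/2 - π/10 by ring, Real.cos_pi_div_two_sub]; rfl
lemma trig5 : Real.sin (π/5) = 2*sg*gm := by
  rw [show (π/5:ℝ) = 2*(π/10) by ring, Real.sin_two_mul]; rfl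
lemma trig6 : Real.cos (π/5) = 2*gm^2 - 1 := by
  rw [show (π/5:ℝ) = 2*(π/10) by ring, Real.cos_two_mul]; rfl
lemma trig3 : Real.sin (4*π/5) = 2*sg*gm := by
  rw [show (4*π/5:ℝ) = π - π/5 by ring, Real.sin_pi_sub, trig5]
lemma trig4 : Real.cos (4*π/5) = -(2*gm^2 - 1) := by
  rw [show (4*π/5:ℝ) = π - π/5 by ring, Real.cos_pi_sub, trig6]

lemma v0_eq : R5plus 0 = ((0:ℝ), (0:ℝ)) := rfl
lemma v3_eq : R5plus 3 = ((0:ℝ), (1:ℝ)) := rfl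
lemma v1_eq : R5plus 1 = ((1/2 : ℝ), qq) := by
  show (Real.sin (2*π/5) / (2*Real.cos (π/10)), (1 - Real.cos (2*π/5)) / (2*Real.cos (π/10))) = _
  rw [trig1, trig2, show Real.cos (π/10) = gm from rfl, qq]
  rw [Prod.mk.injEq]
  constructor
  · rw [div_eq_iff (by nlinarith [gm_pos] : ((2:ℝ)*gm) ≠ 0)]; ring
  · rfl
lemma v2_eq : R5plus 2 = (sg, gm) := by
  show (Real.sin (4*π/5) / (2*Real.cos (π/10)), (1 - Real.cos (4*π/5)) / (2*Real.cos (π/10))) = _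
  rw [trig3, trig4, show Real.cos (π/10) = gm from rfl, Prod.mk.injEq]
  constructor
  · rw [div_eq_iff (by nlinarith [gm_pos] : ((2:ℝ)*gm) ≠ 0)]; ring
  · rw [div_eq_iff (by nlinarith [gm_pos] : ((2:ℝ)*gm) ≠ 0)]; ring
lemma v4_eq : R5plus 4 = (-sg, gm) := by
  show (-(Real.sin (4*π/5) / (2*Real.cos (π/10))), (1 - Real.cos (4*π/5)) / (2*Real.cos (π/10))) = _
  have h := v2_eq
  rw [show R5plus 2 = (Real.sin (4*π/5) / (2*Real.cos (π/10)), (1 - Real.cos (4*π/5)) / (2*Real.cos (π/10))) from rfl, Prod.mk.injEq] at h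
  rw [Prod.mk.injEq, h.1, h.2]; exact ⟨rfl, rfl⟩
lemma v5_eq : R5plus 5 = (-(1/2 : ℝ), qq) := by
  show (-(Real.sin (2*π/5) / (2*Real.cos (π/10))), (1 - Real.cos (2*π/5)) / (2*Real.cos (π/10))) = _
  have h := v1_eq
  rw [show R5plus 1 = (Real.sin (2*π/5) / (2*Real.cos (π/10)), (1 - Real.cos (2*π/5)) / (2*Real.cos (π/10))) from rfl, Prod.mk.injEq] at h
  rw [Prod.mk.injEq, h.1, h.2]; exact ⟨rfl, rfl⟩

lemma fU_le1 (x : ℝ) : fU x ≤ l1 x := min_le_of_left_le (min_le_left _ _)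

set_option maxHeartbeats 1000000 in
lemma vertex_mem : ∀ i, R5plus i ∈ SS := by
  have hs := sg_bounds; have hg := gm_bounds; have hq := qq_bounds; have hm := mm_bounds
  have hsl := slope1_bounds; have h1 := hc1; have h2 := hc2; have h3 := hc3
  have le_fU : ∀ x y : ℝ, y ≤ l1 x → y ≤ l2 x → y ≤ l3 x → y ≤ l4 x → y ≤ fU x := by
    intro x y a b c d; exact le_min (le_min a b) (le_min c d)
  have mem0 : R5plus 0 ∈ SS := by
    rw [show R5plus 0 = ((0:ℝ),(0:ℝ)) from rfl]
    simp only [SS, Set.mem_setOf_eq, Set.mem_Icc]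
    refine ⟨⟨by norm_num, by norm_num⟩, ?_, ?_⟩
    · simp [fL]
    · exact le_fU _ _ (by simp only [l1]; nlinarith) (by simp only [l2]; nlinarith)
        (by simp only [l3]; nlinarith) (by simp only [l4]; nlinarith)
  have mem1 : R5plus 1 ∈ SS := by
    rw [v1_eq]
    simp only [SS, Set.mem_setOf_eq, Set.mem_Icc]
    refine ⟨⟨by norm_num, by norm_num⟩, ?_, ?_⟩
    · simp only [fL, abs_of_nonneg (by norm_num : (0:ℝ) ≤ 1/2)]; nlinarith
    · exact le_fU _ _ (by simp only [l1]; nlinarith) (by simp only [l2]; nlinarith)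
        (by simp only [l3]; nlinarith) (by simp only [l4]; nlinarith)
  have mem2 : R5plus 2 ∈ SS := by
    rw [v2_eq]
    simp only [SS, Set.mem_setOf_eq, Set.mem_Icc]
    refine ⟨⟨by nlinarith, by nlinarith⟩, ?_, ?_⟩
    · simp only [fL, abs_of_nonneg (by nlinarith : (0:ℝ) ≤ sg)]; nlinarith
    · exact le_fU _ _ (by simp only [l1]; nlinarith) (by simp only [l2]; nlinarith)
        (by simp only [l3]; nlinarith) (by simp only [l4]; nlinarith)
  have mem3 : R5plus 3 ∈ SS := by
    rw [v3_eq]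
    simp only [SS, Set.mem_setOf_eq, Set.mem_Icc]
    refine ⟨⟨by norm_num, by norm_num⟩, ?_, ?_⟩
    · simp [fL]
    · exact le_fU _ _ (by simp only [l1]; nlinarith) (by simp only [l2]; nlinarith)
        (by simp only [l3]; nlinarith) (by simp only [l4]; nlinarith)
  have mem4 : R5plus 4 ∈ SS := by
    rw [v4_eq]
    simp only [SS, Set.mem_setOf_eq, Set.mem_Icc]
    refine ⟨⟨by nlinarith, by nlinarith⟩, ?_, ?_⟩
    · simp only [fL, abs_neg, abs_of_nonneg (by nlinarith : (0:ℝ) ≤ sg)]; nlinarith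
    · exact le_fU _ _ (by simp only [l1]; nlinarith) (by simp only [l2]; nlinarith)
        (by simp only [l3]; nlinarith) (by simp only [l4]; nlinarith)
  have mem5 : R5plus 5 ∈ SS := by
    rw [v5_eq]
    simp only [SS, Set.mem_setOf_eq, Set.mem_Icc]
    refine ⟨⟨by norm_num, by norm_num⟩, ?_, ?_⟩
    · simp only [fL, abs_neg, abs_of_nonneg (by norm_num : (0:ℝ) ≤ 1/2)]; nlinarith
    · exact le_fU _ _ (by simp only [l1]; nlinarith) (by simp only [l2]; nlinarith)
        (by simp only [l3]; nlinarith) (by simp only [l4]; nlinarith)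
  intro i
  fin_cases i
  exacts [mem0, mem1, mem2, mem3, mem4, mem5]

lemma hull_subset_SS : convexHull ℝ (Set.range R5plus) ⊆ SS :=
  convexHull_min (by rintro p ⟨i, rfl⟩; exact vertex_mem i) SS_convex

lemma lower_mem_hull : ∀ x ∈ Icc (-(1/2):ℝ) (1/2), (x, fL x) ∈ convexHull ℝ (Set.range R5plus) := by
  intro x hx
  have hC : Convex ℝ (convexHull ℝ (Set.range R5plus)) := convex_convexHull ℝ _
  have hv0 : R5plus 0 ∈ convexHull ℝ (Set.range R5plus) := subset_convexHull ℝ _ ⟨0, rfl⟩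
  have hv1 : R5plus 1 ∈ convexHull ℝ (Set.range R5plus) := subset_convexHull ℝ _ ⟨1, rfl⟩
  have hv5 : R5plus 5 ∈ convexHull ℝ (Set.range R5plus) := subset_convexHull ℝ _ ⟨5, rfl⟩
  rcases le_total 0 x with h|h
  · have := hC hv0 hv1 (by linarith [hx.2] : (0:ℝ) ≤ 1-2*x) (by linarith : (0:ℝ) ≤ 2*x) (by ring)
    convert this using 1
    rw [v0_eq, v1_eq, Prod.ext_iff]
    constructor
    · show x = (1-2*x) * 0 + 2*x * (1/2); ring
    · show fL x = (1-2*x) * 0 + 2*x * qq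
      simp only [fL, abs_of_nonneg h]; ring
  · have := hC hv0 hv5 (by linarith [hx.1] : (0:ℝ) ≤ 1+2*x) (by linarith : (0:ℝ) ≤ -(2*x)) (by ring)
    convert this using 1
    rw [v0_eq, v5_eq, Prod.ext_iff]
    constructor
    · show x = (1+2*x) * 0 + -(2*x) * (-(1/2)); ring
    · show fL x = (1+2*x) * 0 + -(2*x) * qq
      simp only [fL, abs_of_nonpos h]; ring

lemma upper_mem_hull : ∀ x ∈ Icc (-(1/2):ℝ) (1/2), (x, fU x) ∈ convexHull ℝ (Set.range R5plus) := by
  intro x hx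
  have hs := sg_bounds
  have hC : Convex ℝ (convexHull ℝ (Set.range R5plus)) := convex_convexHull ℝ _
  have hv1 : R5plus 1 ∈ convexHull ℝ (Set.range R5plus) := subset_convexHull ℝ _ ⟨1, rfl⟩
  have hv2 : R5plus 2 ∈ convexHull ℝ (Set.range R5plus) := subset_convexHull ℝ _ ⟨2, rfl⟩
  have hv3 : R5plus 3 ∈ convexHull ℝ (Set.range R5plus) := subset_convexHull ℝ _ ⟨3, rfl⟩
  have hv4 : R5plus 4 ∈ convexHull ℝ (Set.range R5plus) := subset_convexHull ℝ _ ⟨4, rfl⟩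
  have hv5 : R5plus 5 ∈ convexHull ℝ (Set.range R5plus) := subset_convexHull ℝ _ ⟨5, rfl⟩
  rcases le_total 0 x with h|h
  · rcases le_total x sg with h2|h2
    · rw [l1_key x ⟨h, h2⟩]
      have := hC hv3 hv2 (by rw [sub_nonneg, div_le_one (by nlinarith : (0:ℝ) < sg)]; exact h2 :
          (0:ℝ) ≤ 1 - x/sg) (div_nonneg h (by nlinarith) : (0:ℝ) ≤ x/sg) (by ring)
      convert this using 1
      rw [v3_eq, v2_eq, Prod.ext_iff]
      have hxs : x/sg*sg = x := div_mul_cancel₀ _ sg_ne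
      constructor
      · show x = (1-x/sg) * 0 + x/sg * sg; linear_combination -hxs
      · show l1 x = (1-x/sg) * 1 + x/sg * gm
        simp only [l1]; ring
    · rw [l2_key x ⟨h2, hx.2⟩]
      set t := (x - sg)/(1/2 - sg) with ht
      have htnn : 0 ≤ t := div_nonneg (by linarith) (by nlinarith)
      have ht1 : t ≤ 1 := by rw [ht, div_le_one (by nlinarith)]; linarith [hx.2]
      have hts : t*(1/2-sg) = x - sg := div_mul_cancel₀ _ (by nlinarith)
      have := hC hv2 hv1 (by linarith : (0:ℝ) ≤ 1-t) htnn (by ring)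
      convert this using 1
      rw [v2_eq, v1_eq, Prod.ext_iff]
      constructor
      · show x = (1-t) * sg + t * (1/2); linear_combination -hts
      · show l2 x = (1-t) * gm + t * qq
        simp only [l2]; linear_combination (-mm)*hts + t*hc2
  · rw [← fU_neg]
    rcases le_total (-x) sg with h2|h2
    · rw [l1_key (-x) ⟨by linarith, h2⟩]
      have := hC hv3 hv4 (by rw [sub_nonneg, div_le_one (by nlinarith : (0:ℝ) < sg)]; exact h2 :
          (0:ℝ) ≤ 1 - (-x)/sg) (div_nonneg (by linarith) (by nlinarith) : (0:ℝ) ≤ (-x)/sg) (by ring)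
      convert this using 1
      rw [v3_eq, v4_eq, Prod.ext_iff]
      have hxs : (-x)/sg*sg = -x := div_mul_cancel₀ _ sg_ne
      constructor
      · show x = (1-(-x)/sg) * 0 + (-x)/sg * (-sg); linear_combination hxs
      · show l1 (-x) = (1-(-x)/sg) * 1 + (-x)/sg * gm
        simp only [l1]; ring
    · rw [l2_key (-x) ⟨h2, by linarith [hx.1]⟩]
      set t := (-x - sg)/(1/2 - sg) with ht
      have htnn : 0 ≤ t := div_nonneg (by linarith) (by nlinarith)
      have ht1 : t ≤ 1 := by rw [ht, div_le_one (by nlinarith)]; linarith [hx.1]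
      have hts : t*(1/2-sg) = -x - sg := div_mul_cancel₀ _ (by nlinarith)
      have := hC hv4 hv5 (by linarith : (0:ℝ) ≤ 1-t) htnn (by ring)
      convert this using 1
      rw [v4_eq, v5_eq, Prod.ext_iff]
      constructor
      · show x = (1-t) * (-sg) + t * (-(1/2)); linear_combination hts
      · show l2 (-x) = (1-t) * gm + t * qq
        simp only [l2]; linear_combination (-mm)*hts + t*hc2

lemma SS_subset_hull : SS ⊆ convexHull ℝ (Set.range R5plus) := by
  rintro ⟨x, y⟩ ⟨hx, hy1, hy2⟩
  have hA := lower_mem_hull x hx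
  have hB := upper_mem_hull x hx
  have hC : Convex ℝ (convexHull ℝ (Set.range R5plus)) := convex_convexHull ℝ _
  rcases eq_or_lt_of_le (le_trans hy1 hy2 : fL x ≤ fU x) with he|hlt
  · have hy : y = fL x := le_antisymm (he ▸ hy2) hy1
    exact hy ▸ hA
  · set a := (fU x - y)/(fU x - fL x) with ha
    set b := (y - fL x)/(fU x - fL x) with hb
    have hd : 0 < fU x - fL x := by linarith
    have hann : 0 ≤ a := div_nonneg (by linarith) (by linarith)
    have hbnn : 0 ≤ b := div_nonneg (by linarith) (by linarith)
    have hab : a + b = 1 := by rw [ha, hb, ← add_div, div_eq_one_iff_eq (by linarith)]; ring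
    have := hC hA hB hann hbnn hab
    convert this using 1
    rw [Prod.ext_iff]
    constructor
    · show x = a * x + b * x; linear_combination (-x)*hab
    · show y = a * fL x + b * fU x
      rw [ha, hb]
      field_simp
      ring

lemma hull_eq_SS : convexHull ℝ (Set.range R5plus) = SS :=
  subset_antisymm hull_subset_SS SS_subset_hull

lemma l1_cont : Continuous l1 := by unfold l1; fun_prop
lemma l2_cont : Continuous l2 := by unfold l2; fun_prop
lemma l3_cont : Continuous l3 := by unfold l3; fun_prop
lemma l4_cont : Continuous l4 := by unfold l4; fun_prop
lemma fU_cont : Continuous fU := by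
  unfold fU; exact ((l1_cont.min l2_cont).min (l3_cont.min l4_cont))
lemma fL_cont : Continuous fL := by unfold fL; fun_prop

lemma SS_closed : IsClosed SS := by
  have : SS = {p : ℝ×ℝ | -(1/2) ≤ p.1} ∩ {p : ℝ×ℝ | p.1 ≤ 1/2}
      ∩ {p : ℝ×ℝ | fL p.1 ≤ p.2} ∩ {p : ℝ×ℝ | p.2 ≤ fU p.1} := by
    ext p; simp only [SS, Set.mem_setOf_eq, Set.mem_Icc, Set.mem_inter_iff]; tauto
  rw [this]
  exact (((isClosed_le continuous_const continuous_fst).inter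
    (isClosed_le continuous_fst continuous_const)).inter
    (isClosed_le (fL_cont.comp continuous_fst) continuous_snd)).inter
    (isClosed_le continuous_snd (fU_cont.comp continuous_fst))

lemma slice_eq (x : ℝ) : Prod.mk x ⁻¹' SS =
    if x ∈ Icc (-(1/2):ℝ) (1/2) then Icc (fL x) (fU x) else ∅ := by
  ext y
  by_cases h : x ∈ Icc (-(1/2):ℝ) (1/2) <;> simp [SS, h]

lemma vol_SS : volume SS = ENNReal.ofReal (∫ x in Icc (-(1/2):ℝ) (1/2), (fU x - fL x)) := by
  have hS : MeasurableSet SS := SS_closed.measurableSet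
  rw [MeasureTheory.Measure.volume_eq_prod, Measure.prod_apply hS]
  have hcong : ∀ x : ℝ, volume (Prod.mk x ⁻¹' SS) =
      (Icc (-(1/2):ℝ) (1/2)).indicator (fun x => ENNReal.ofReal (fU x - fL x)) x := by
    intro x
    rw [slice_eq x]
    by_cases h : x ∈ Icc (-(1/2):ℝ) (1/2)
    · rw [if_pos h, indicator_of_mem h, Real.volume_Icc]
    · rw [if_neg h, indicator_of_notMem h, measure_empty]
  rw [lintegral_congr hcong, lintegral_indicator measurableSet_Icc]
  rw [← ofReal_integral_eq_lintegral_ofReal]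
  · exact (fU_cont.sub fL_cont).integrableOn_Icc
  · exact (ae_restrict_iff' measurableSet_Icc).2 (ae_of_all _
      (fun x hx => sub_nonneg.2 (fL_le_fU x hx)))

lemma affine_integral (c d a b : ℝ) : ∫ x in a..b, (c*x+d) = c*(b^2-a^2)/2 + d*(b-a) := by
  have h1 : IntervalIntegrable (fun x : ℝ => c*x) volume a b :=
    (continuous_const.mul continuous_id).intervalIntegrable _ _
  have h2 : IntervalIntegrable (fun _ : ℝ => d) volume a b := intervalIntegrable_const
  rw [intervalIntegral.integral_add h1 h2, intervalIntegral.integral_const_mul,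
    integral_id, intervalIntegral.integral_const, smul_eq_mul]
  ring

lemma integral_eval : ∫ x in Icc (-(1/2):ℝ) (1/2), (fU x - fL x) = sg + gm/2 - qq*sg := by
  have hs := sg_bounds
  have f_cont : Continuous (fun x => fU x - fL x) := fU_cont.sub fL_cont
  have hii : ∀ a b : ℝ, IntervalIntegrable (fun x => fU x - fL x) volume a b :=
    fun a b => f_cont.intervalIntegrable a b
  rw [MeasureTheory.integral_Icc_eq_integral_Ioc,
    ← intervalIntegral.integral_of_le (by norm_num : -(1/2:ℝ) ≤ 1/2)]
  rw [← intervalIntegral.integral_add_adjacent_intervals (a := -(1/2:ℝ)) (b := 0) (c := 1/2)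
    (hii _ _) (hii _ _),
    ← intervalIntegral.integral_add_adjacent_intervals (a := -(1/2:ℝ)) (b := -sg) (c := 0)
    (hii _ _) (hii _ _),
    ← intervalIntegral.integral_add_adjacent_intervals (a := (0:ℝ)) (b := sg) (c := 1/2)
    (hii _ _) (hii _ _)]
  have e1 : ∫ x in (-(1/2:ℝ))..(-sg), (fU x - fL x)
      = ∫ x in (-(1/2:ℝ))..(-sg), ((2*qq - mm)*x + (gm - sg*mm)) := by
    apply intervalIntegral.integral_congr
    intro x hx
    rw [Set.uIcc_of_le (by nlinarith) ] at hx
    have hx1 := hx.1; have hx2 := hx.2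
    have hUx : fU x = l4 x := by
      have : fU x = fU (-(-x)) := by norm_num
      rw [this, fU_neg, l2_key (-x) ⟨by linarith, by linarith⟩, l2_neg]
    beta_reduce
    rw [hUx]
    simp only [fL, l4, abs_of_nonpos (by nlinarith : x ≤ 0)]
    ring
  have e2 : ∫ x in (-sg)..(0:ℝ), (fU x - fL x)
      = ∫ x in (-sg)..(0:ℝ), (((1-gm)/sg + 2*qq)*x + 1) := by
    apply intervalIntegral.integral_congr
    intro x hx
    rw [Set.uIcc_of_le (by nlinarith) ] at hx
    have hx1 := hx.1; have hx2 := hx.2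
    have hUx : fU x = l3 x := by
      have : fU x = fU (-(-x)) := by norm_num
      rw [this, fU_neg, l1_key (-x) ⟨by linarith, by linarith⟩, l1_neg]
    beta_reduce
    rw [hUx]
    simp only [fL, l3, abs_of_nonpos (by nlinarith : x ≤ 0)]
    ring
  have e3 : ∫ x in (0:ℝ)..sg, (fU x - fL x)
      = ∫ x in (0:ℝ)..sg, (((gm-1)/sg - 2*qq)*x + 1) := by
    apply intervalIntegral.integral_congr
    intro x hx
    rw [Set.uIcc_of_le (by nlinarith) ] at hx
    beta_reduce
    rw [l1_key x ⟨hx.1, hx.2⟩]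
    simp only [fL, l1, abs_of_nonneg hx.1]
    ring
  have e4 : ∫ x in sg..(1/2:ℝ), (fU x - fL x)
      = ∫ x in sg..(1/2:ℝ), ((mm - 2*qq)*x + (gm - sg*mm)) := by
    apply intervalIntegral.integral_congr
    intro x hx
    rw [Set.uIcc_of_le (by nlinarith) ] at hx
    beta_reduce
    rw [l2_key x ⟨hx.1, hx.2⟩]
    simp only [fL, l2, abs_of_nonneg (by nlinarith [hx.1] : (0:ℝ) ≤ x)]
    ring
  rw [e1, e2, e3, e4, affine_integral, affine_integral, affine_integral, affine_integral]
  have h1 := hc1; have h2 := hc2; have h3 := hc3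
  linear_combination (1/2-sg)*h2 + (sg/2)*h1 - (sg/2)*h3

lemma key_cubic : 1 - 4*sg + 8*sg^3 = 0 := by
  have h5 : Real.sqrt 5 ^ 2 = 5 := Real.sq_sqrt (by norm_num)
  rw [sg_eq]
  linear_combination ((Real.sqrt 5 - 3)/8) * h5

lemma final_eq : sg + gm/2 - qq*sg =
    (5/2) * (2*sg*gm - sg/gm) + sg - (1/2)*(2*sg*gm) := by
  have hg := gm_pos
  have h2 := gm_sq
  have hk := key_cubic
  rw [qq]
  field_simp
  linear_combination (1 - 8*sg)*h2 + hk

lemma area_ineq : 3 * Real.sqrt 3 / 8 < sg + gm/2 - qq*sg := by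
  have h3 : Real.sqrt 3 < 1.7321 := by
    nlinarith [Real.sq_sqrt (by norm_num : (3:ℝ) ≥ 0), Real.sqrt_nonneg 3]
  have hs := sg_bounds; have hg := gm_bounds; have hq := qq_bounds
  nlinarith


/-- The area of the hexagon `R₅⁺` equals
`(5/2)(sin(π/5) - tan(π/10)) + sin(π/10) - (1/2) sin(π/5)`, which is strictly greater than
`(6/8) sin(π/3) = 3√3/8`, the area of the regular small hexagon. -/
theorem R5plus_area :
    (volume (convexHull ℝ (Set.range R5plus))).toReal =
        (5 / 2 : ℝ) * (Real.sin (π / 5) - Real.tan (π / 10))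
          + Real.sin (π / 10) - (1 / 2) * Real.sin (π / 5) ∧
    (6 / 8 : ℝ) * Real.sin (π / 3) = 3 * Real.sqrt 3 / 8 ∧
    3 * Real.sqrt 3 / 8 <
      (5 / 2 : ℝ) * (Real.sin (π / 5) - Real.tan (π / 10))
        + Real.sin (π / 10) - (1 / 2) * Real.sin (π / 5) := by
  have hval : (5 / 2 : ℝ) * (Real.sin (π / 5) - Real.tan (π / 10))
      + Real.sin (π / 10) - (1 / 2) * Real.sin (π / 5) = sg + gm/2 - qq*sg := by
    rw [Real.tan_eq_sin_div_cos, trig5, show Real.sin (π/10) = sg from rfl,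
      show Real.cos (π/10) = gm from rfl]
    exact final_eq.symm
  refine ⟨?_, ?_, ?_⟩
  · rw [hull_eq_SS, vol_SS, integral_eval, hval, ENNReal.toReal_ofReal]
    have hs := sg_bounds; have hg := gm_bounds; have hq := qq_bounds
    nlinarith
  · rw [Real.sin_pi_div_three]; ring
  · rw [hval]; exact area_ineq
end

section
/- For n ≥ 3, the sequence Ā_n := (n/2)·(sin(π/n) − tan(π/(2n))) is strictly increasing in n and converges to π/4 as n → ∞. -/
open Real Filter Topology

noncomputable def NN (x : ℝ) : ℝ := Real.sin x * Real.cos (2*x) / Real.cos x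
noncomputable def N1 (x : ℝ) : ℝ := Real.cos (2*x) / Real.cos x ^ 2 - 4 * Real.sin x ^ 2

lemma hasDerivAt_NN {x : ℝ} (hx : Real.cos x ≠ 0) : HasDerivAt NN (N1 x) x := by
  have h2x : HasDerivAt (fun x : ℝ => Real.cos (2*x)) (-Real.sin (2*x) * 2) x := by
    have := (Real.hasDerivAt_cos (2*x)).comp x ((hasDerivAt_id x).const_mul 2)
    simp only [mul_one] at this
    exact this
  have h := ((Real.hasDerivAt_sin x).mul h2x).div (Real.hasDerivAt_cos x) hx
  refine h.congr_deriv ?_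
  simp only [Pi.mul_apply]
  rw [N1, Real.sin_two_mul, Real.cos_two_mul]
  have hpy := Real.sin_sq_add_cos_sq x
  field_simp
  nlinarith [hpy, sq_nonneg (Real.sin x), sq_nonneg (Real.cos x)]

lemma hasDerivAt_N1 {x : ℝ} (hx : Real.cos x ≠ 0) :
    HasDerivAt N1 (-2 * Real.sin x / Real.cos x ^ 3 - 4 * Real.sin (2*x)) x := by
  have h2x : HasDerivAt (fun x : ℝ => Real.cos (2*x)) (-Real.sin (2*x) * 2) x := by
    have := (Real.hasDerivAt_cos (2*x)).comp x ((hasDerivAt_id x).const_mul 2)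
    simp only [mul_one] at this
    exact this
  have hc2 : HasDerivAt (fun x : ℝ => Real.cos x ^ 2) (2 * Real.cos x ^ 1 * (-Real.sin x)) x :=
    (Real.hasDerivAt_cos x).pow 2
  have hs2 : HasDerivAt (fun x : ℝ => 4 * Real.sin x ^ 2) (4 * (2 * Real.sin x ^ 1 * Real.cos x)) x :=
    ((Real.hasDerivAt_sin x).pow 2).const_mul 4
  have h := (h2x.div hc2 (pow_ne_zero 2 hx)).sub hs2
  refine h.congr_deriv ?_
  rw [Real.sin_two_mul, Real.cos_two_mul]
  have hpy := Real.sin_sq_add_cos_sq x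
  field_simp
  ring_nf

noncomputable def phi (x : ℝ) : ℝ := x * N1 x - NN x

lemma hasDerivAt_phi {x : ℝ} (hx : Real.cos x ≠ 0) :
    HasDerivAt phi (x * (-2 * Real.sin x / Real.cos x ^ 3 - 4 * Real.sin (2*x))) x := by
  have h := (((hasDerivAt_id x).mul (hasDerivAt_N1 hx)).sub (hasDerivAt_NN hx))
  refine h.congr_deriv ?_
  simp only [id_eq]
  ring

lemma cos_ne_zero_of_mem {x : ℝ} (hx : x ∈ Set.Ico 0 (π/2)) : Real.cos x ≠ 0 :=
  ne_of_gt (Real.cos_pos_of_mem_Ioo ⟨by linarith [Real.pi_pos, hx.1], hx.2⟩)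

lemma phi_neg {x : ℝ} (hx : x ∈ Set.Ioo 0 (π/2)) : phi x < 0 := by
  have hanti : StrictAntiOn phi (Set.Ico 0 (π/2)) := by
    apply strictAntiOn_of_deriv_neg (convex_Ico 0 (π/2))
    · intro y hy
      exact (hasDerivAt_phi (cos_ne_zero_of_mem hy)).continuousAt.continuousWithinAt
    · intro y hy
      rw [interior_Ico] at hy
      obtain ⟨hy1, hy2⟩ := hy
      have hpi := Real.pi_pos
      rw [(hasDerivAt_phi (cos_ne_zero_of_mem (Set.mem_Ico.mpr ⟨hy1.le, hy2⟩))).deriv]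
      have hs : 0 < Real.sin y := Real.sin_pos_of_pos_of_lt_pi hy1 (by linarith)
      have hc : 0 < Real.cos y := Real.cos_pos_of_mem_Ioo ⟨by linarith, hy2⟩
      have hs2 : 0 < Real.sin (2*y) := Real.sin_pos_of_pos_of_lt_pi (by linarith) (by linarith)
      have : -2 * Real.sin y / Real.cos y ^ 3 - 4 * Real.sin (2*y) < 0 := by
        have h1 : -2 * Real.sin y / Real.cos y ^ 3 < 0 :=
          div_neg_of_neg_of_pos (by nlinarith) (by positivity)
        nlinarith
      nlinarith [hy1]
  have h0 : phi 0 = 0 := by simp [phi, NN, N1]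
  have := hanti (Set.mem_Ico.mpr ⟨le_refl 0, by linarith [Real.pi_pos]⟩)
      (Set.mem_Ico.mpr ⟨hx.1.le, hx.2⟩) hx.1
  linarith [this]

noncomputable def G (x : ℝ) : ℝ := NN x / x

lemma G_anti : StrictAntiOn G (Set.Ioo 0 (π/2)) := by
  apply strictAntiOn_of_deriv_neg (convex_Ioo 0 (π/2))
  · intro y hy
    have hc := cos_ne_zero_of_mem ⟨hy.1.le, hy.2⟩
    exact ((hasDerivAt_NN hc).div (hasDerivAt_id y) (ne_of_gt hy.1)).continuousAt.continuousWithinAt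
  · intro y hy
    rw [interior_Ioo] at hy
    obtain ⟨hy1, hy2⟩ := hy
    have hc := cos_ne_zero_of_mem ⟨hy1.le, hy2⟩
    have hD : HasDerivAt G ((N1 y * y - NN y * 1) / y ^ 2) y :=
      (hasDerivAt_NN hc).div (hasDerivAt_id y) (ne_of_gt hy1)
    rw [hD.deriv]
    have hphi := phi_neg ⟨hy1, hy2⟩
    have : N1 y * y - NN y * 1 = phi y := by rw [phi]; ring
    rw [this]
    exact div_neg_of_neg_of_pos hphi (by positivity)

lemma mem_Ioo_pi_div {n : ℕ} (hn : 2 ≤ n) : π / (2*n) ∈ Set.Ioo 0 (π/2) := by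
  have hpi := Real.pi_pos
  have hn' : (2:ℝ) ≤ n := by exact_mod_cast hn
  constructor
  · positivity
  · rw [div_lt_div_iff₀ (by positivity) (by norm_num)]
    nlinarith

lemma repr_eq {n : ℕ} (hn : 2 ≤ n) :
    (n / 2 : ℝ) * (Real.sin (π / n) - Real.tan (π / (2 * n))) = (π/4) * G (π / (2*n)) := by
  have hpi := Real.pi_pos
  have hn0 : (n:ℝ) ≠ 0 := by positivity
  have hmem := mem_Ioo_pi_div hn
  have hc : Real.cos (π / (2*n)) ≠ 0 := cos_ne_zero_of_mem ⟨hmem.1.le, hmem.2⟩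
  have h2 : π / (n:ℝ) = 2 * (π / (2*n)) := by field_simp
  rw [G, NN, Real.tan_eq_sin_div_cos, h2, Real.sin_two_mul, Real.cos_two_mul]
  field_simp
  ring

/-- Reinhardt's upper bound `Ā_n = (n/2)(sin(π/n) - tan(π/(2n)))` is strictly increasing for
`n ≥ 3` and converges to `π/4`, the area of the disk of unit diameter. -/
theorem reinhardt_bound_mono_tendsto :
    (∀ m n : ℕ, 3 ≤ m → m < n →
        (m / 2 : ℝ) * (Real.sin (π / m) - Real.tan (π / (2 * m))) <
        (n / 2 : ℝ) * (Real.sin (π / n) - Real.tan (π / (2 * n)))) ∧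
    Tendsto (fun n : ℕ => (n / 2 : ℝ) * (Real.sin (π / n) - Real.tan (π / (2 * n))))
      atTop (nhds (π / 4)) := by
  have hpi := Real.pi_pos
  constructor
  · intro m n hm hmn
    have hm2 : 2 ≤ m := by omega
    have hn2 : 2 ≤ n := by omega
    rw [repr_eq hm2, repr_eq hn2]
    have hlt : π / (2*n) < π / (2*m) := by
      apply div_lt_div_of_pos_left hpi
      · positivity
      · have : (m:ℝ) < n := by exact_mod_cast hmn
        linarith
    have := G_anti (mem_Ioo_pi_div hn2) (mem_Ioo_pi_div hm2) hlt
    nlinarith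
  · have hslope : Tendsto (fun x : ℝ => Real.sin x / x) (𝓝[≠] (0:ℝ)) (𝓝 1) := by
      have := hasDerivAt_iff_tendsto_slope.mp (Real.hasDerivAt_sin 0)
      refine (Tendsto.congr (fun x => ?_) (by simpa [slope_fun_def, Real.cos_zero] using this))
      rw [div_eq_inv_mul]
    have hcc : Tendsto (fun x : ℝ => Real.cos (2*x) / Real.cos x) (𝓝 (0:ℝ)) (𝓝 1) := by
      have h : ContinuousAt (fun x : ℝ => Real.cos (2*x) / Real.cos x) 0 := by
        apply ContinuousAt.div
        · exact (Real.continuous_cos.comp (continuous_const.mul continuous_id)).continuousAt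
        · exact Real.continuous_cos.continuousAt
        · simp
      simpa using h.tendsto
    have hG : Tendsto G (𝓝[≠] (0:ℝ)) (𝓝 1) := by
      have h := hslope.mul (hcc.mono_left nhdsWithin_le_nhds)
      rw [one_mul] at h
      apply h.congr
      intro x
      rw [G, NN]
      ring
    have hx0 : Tendsto (fun n : ℕ => π/(2*(n:ℝ))) atTop (𝓝[≠] (0:ℝ)) := by
      apply tendsto_nhdsWithin_of_tendsto_nhds_of_eventually_within
      · exact Tendsto.div_atTop tendsto_const_nhds
          (Tendsto.const_mul_atTop two_pos tendsto_natCast_atTop_atTop)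
      · filter_upwards [eventually_ge_atTop 1] with n hn
        have hn' : (1:ℝ) ≤ n := by exact_mod_cast hn
        have : 0 < π/(2*(n:ℝ)) := by positivity
        exact ne_of_gt this
    have h := (hG.comp hx0).const_mul (π/4)
    rw [mul_one] at h
    apply h.congr'
    filter_upwards [eventually_ge_atTop 2] with n hn
    exact (repr_eq hn).symm
end
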